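/- If T is a tree on n vertices, then ρ(T) ≤ √(n−1), with equality if and only if T is isomorphic to the star K_{1,n−1}. -/

import Mathlib

open Matrix SimpleGraph

attribute [local instance] Classical.propDecidable

/-- The spectral radius of a finite simple graph: the largest eigenvalue of its
adjacency matrix (as the supremum of its real spectrum). -/
noncomputable def specRad {V : Type*} [Fintype V] [DecidableEq V] (G : SimpleGraph V) : ℝ :=
  sSup (spectrum ℝ (G.adjMatrix ℝ))

section Aux

open Finset

set_option linter.unusedSectionVars false

variable {V : Type*} [Fintype V] [DecidableEq V] {T : SimpleGraph V}

/- ## Spectrum basics -/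

lemma specaux_mem_spec_iff {A : Matrix V V ℝ} {μ : ℝ} :
    μ ∈ spectrum ℝ A ↔ ∃ v : V → ℝ, v ≠ 0 ∧ A *ᵥ v = μ • v := by
  have key : ∀ w, (Matrix.toLinAlgEquiv (Pi.basisFun ℝ V)) A w = A *ᵥ w := fun w => by
    funext x
    simp [Matrix.toLinAlgEquiv_apply, Finset.sum_apply, Pi.basisFun_apply,
      Pi.single_apply, Pi.basisFun_repr, Matrix.mulVec, dotProduct]
  rw [← AlgEquiv.spectrum_eq (Matrix.toLinAlgEquiv (Pi.basisFun ℝ V)),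
      ← Module.End.hasEigenvalue_iff_mem_spectrum, Module.End.hasEigenvalue_iff,
      Submodule.ne_bot_iff]
  constructor
  · rintro ⟨v, hv, hv0⟩
    rw [Module.End.mem_eigenspace_iff, key] at hv
    exact ⟨v, hv0, hv⟩
  · rintro ⟨v, hv0, hv⟩
    exact ⟨v, by rw [Module.End.mem_eigenspace_iff, key]; exact hv, hv0⟩

lemma specaux_adj_isHermitian (T : SimpleGraph V) : (T.adjMatrix ℝ).IsHermitian := by
  ext i j
  simp [Matrix.conjTranspose_apply, adj_comm]

lemma specaux_spec_nonempty (T : SimpleGraph V) (hne : Nonempty V) :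
    (spectrum ℝ (T.adjMatrix ℝ)).Nonempty := by
  obtain ⟨i⟩ := hne
  exact ⟨_, (specaux_adj_isHermitian T).eigenvalues_mem_spectrum_real i⟩

/- ## Acyclicity helpers -/

lemma specaux_walk_eq (hac : T.IsAcyclic) {a b : V} (p q : T.Walk a b)
    (hp : p.IsPath) (hq : q.IsPath) : p = q :=
  congrArg Subtype.val (hac.path_unique ⟨p, hp⟩ ⟨q, hq⟩)

lemma specaux_no_triangle (hac : T.IsAcyclic) {a b c : V} (hab : T.Adj a b) (hbc : T.Adj b c)
    (hacadj : T.Adj a c) : False := by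
  have h1 : (Walk.cons hacadj Walk.nil : T.Walk a c).IsPath := by simp [hacadj.ne]
  have h2 : (Walk.cons hab (Walk.cons hbc Walk.nil) : T.Walk a c).IsPath := by
    simp [hab.ne, hbc.ne, hacadj.ne]
  have h3 := congrArg Walk.length (specaux_walk_eq hac _ _ h1 h2)
  simp at h3

lemma specaux_no_quad (hac : T.IsAcyclic) {a b c d : V} (hbd : b ≠ d) (hne : a ≠ c)
    (hab : T.Adj a b) (hbc : T.Adj b c) (had : T.Adj a d) (hdc : T.Adj d c) : False := by
  have h1 : (Walk.cons hab (Walk.cons hbc Walk.nil) : T.Walk a c).IsPath := by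
    simp [hab.ne, hbc.ne, hne]
  have h2 : (Walk.cons had (Walk.cons hdc Walk.nil) : T.Walk a c).IsPath := by
    simp [had.ne, hdc.ne, hne]
  have h3 := specaux_walk_eq hac _ _ h1 h2
  simp [hbd] at h3

lemma specaux_no_23 (hac : T.IsAcyclic) {a b c d e : V} (hne : a ≠ c) (hae : a ≠ e) (hdc : d ≠ c)
    (hab : T.Adj a b) (hbc : T.Adj b c) (had : T.Adj a d) (hde : T.Adj d e)
    (hec : T.Adj e c) : False := by
  have h1 : (Walk.cons hab (Walk.cons hbc Walk.nil) : T.Walk a c).IsPath := by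
    simp [hab.ne, hbc.ne, hne]
  have h2 : (Walk.cons had (Walk.cons hde (Walk.cons hec Walk.nil)) : T.Walk a c).IsPath := by
    simp [had.ne, hde.ne, hec.ne, hne, hae, hdc]
  have h3 := congrArg Walk.length (specaux_walk_eq hac _ _ h1 h2)
  simp at h3

/- ## The combinatorial counting lemma -/

noncomputable def Srow (T : SimpleGraph V) (i : V) : ℕ :=
  ∑ k ∈ T.neighborFinset i, T.degree k

lemma specaux_srow_image (hac : T.IsAcyclic) (i : V) :
    (((T.neighborFinset i).sigma (fun k => T.neighborFinset k)).image
      (fun p => if p.2 = i then p.1 else p.2)).card = Srow T i ∧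
    ((T.neighborFinset i).sigma (fun k => T.neighborFinset k)).image
      (fun p => if p.2 = i then p.1 else p.2) ⊆ univ.erase i := by
  constructor
  · rw [Finset.card_image_of_injOn, Finset.card_sigma]
    · rfl
    · rintro ⟨k, j⟩ hp ⟨k', j'⟩ hq hfeq
      simp only [Finset.mem_coe, Finset.mem_sigma, mem_neighborFinset] at hp hq
      obtain ⟨hik, hkj⟩ := hp
      obtain ⟨hik', hkj'⟩ := hq
      simp only at hfeq
      by_cases h1 : j = i <;> by_cases h2 : j' = i
      · subst h1; subst h2
        rw [if_pos rfl, if_pos rfl] at hfeq; subst hfeq; rfl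
      · rw [if_pos h1, if_neg h2] at hfeq
        rw [← hfeq] at hkj'
        exact (specaux_no_triangle hac hik' hkj' hik).elim
      · rw [if_neg h1, if_pos h2] at hfeq
        rw [hfeq] at hkj
        exact (specaux_no_triangle hac hik hkj hik').elim
      · rw [if_neg h1, if_neg h2] at hfeq
        subst hfeq
        by_cases hkk : k = k'
        · subst hkk; rfl
        · exact (specaux_no_quad hac hkk (Ne.symm h1) hik hkj hik' hkj').elim
  · intro w hw
    simp only [Finset.mem_image] at hw
    obtain ⟨⟨k, j⟩, hp, rfl⟩ := hw
    simp only [Finset.mem_sigma, mem_neighborFinset] at hp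
    rw [Finset.mem_erase]
    by_cases h1 : j = i
    · rw [if_pos h1]; exact ⟨hp.1.ne', Finset.mem_univ _⟩
    · rw [if_neg h1]; exact ⟨h1, Finset.mem_univ _⟩

lemma specaux_Srow_le (hac : T.IsAcyclic) (i : V) : Srow T i ≤ Fintype.card V - 1 := by
  obtain ⟨h1, h2⟩ := specaux_srow_image hac i
  calc Srow T i = _ := h1.symm
    _ ≤ (univ.erase i).card := Finset.card_le_card h2
    _ = Fintype.card V - 1 := by
        rw [Finset.card_erase_of_mem (Finset.mem_univ _), Finset.card_univ]

lemma specaux_Srow_eq (hac : T.IsAcyclic) (i : V) (h : Srow T i = Fintype.card V - 1) :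
    ∀ w, w ≠ i → T.Adj i w ∨ ∃ k, T.Adj i k ∧ T.Adj k w := by
  obtain ⟨h1, h2⟩ := specaux_srow_image hac i
  have hc : (univ.erase i).card ≤ (((T.neighborFinset i).sigma
      (fun k => T.neighborFinset k)).image (fun p => if p.2 = i then p.1 else p.2)).card := by
    rw [h1, h, Finset.card_erase_of_mem (Finset.mem_univ _), Finset.card_univ]
  have heq := Finset.eq_of_subset_of_card_le h2 hc
  intro w hw
  have hmem : w ∈ univ.erase i := Finset.mem_erase.2 ⟨hw, Finset.mem_univ _⟩
  rw [← heq, Finset.mem_image] at hmem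
  obtain ⟨⟨k, j⟩, hp, hfw⟩ := hmem
  simp only [Finset.mem_sigma, mem_neighborFinset] at hp
  by_cases h1' : j = i
  · rw [if_pos h1'] at hfw; subst hfw; exact Or.inl hp.1
  · rw [if_neg h1'] at hfw; subst hfw; exact Or.inr ⟨k, hp.1, hp.2⟩

/- ## Row sums of the squared adjacency matrix -/

lemma specaux_rowsum_adj (T : SimpleGraph V) (u : V) :
    ∑ j, T.adjMatrix ℝ u j = (T.degree u : ℝ) := by
  simp [adjMatrix_apply, Finset.sum_boole, degree, neighborFinset_eq_filter]

lemma specaux_rowsumB (T : SimpleGraph V) (i : V) :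
    ∑ j, (T.adjMatrix ℝ * T.adjMatrix ℝ) i j = (Srow T i : ℝ) := by
  simp only [adjMatrix_mul_apply]
  rw [Finset.sum_comm, Srow, Nat.cast_sum]
  exact Finset.sum_congr rfl fun u _ => specaux_rowsum_adj T u

lemma specaux_B_nonneg (T : SimpleGraph V) (i j : V) :
    0 ≤ (T.adjMatrix ℝ * T.adjMatrix ℝ) i j := by
  rw [adjMatrix_mul_apply]
  exact Finset.sum_nonneg fun u _ => by simp [adjMatrix_apply]; positivity

lemma specaux_B_ne_zero (T : SimpleGraph V) {i j k : V} (h1 : T.Adj i k) (h2 : T.Adj k j) :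
    (T.adjMatrix ℝ * T.adjMatrix ℝ) i j ≠ 0 := by
  rw [adjMatrix_mul_apply]
  intro h
  rw [Finset.sum_eq_zero_iff_of_nonneg (fun u _ => by simp [adjMatrix_apply]; positivity)] at h
  have := h k ((mem_neighborFinset _ _ _).2 h1)
  rw [adjMatrix_apply, if_pos h2] at this
  exact one_ne_zero this

/- ## The eigenvalue chain estimate -/

lemma specaux_chain {μ : ℝ} {v : V → ℝ} (hμv : T.adjMatrix ℝ *ᵥ v = μ • v) (i : V)
    (hmax : ∀ x, |v x| ≤ |v i|) :
    μ ^ 2 * |v i| ≤ (Srow T i : ℝ) * |v i| ∧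
    ((Srow T i : ℝ) * |v i| ≤ μ ^ 2 * |v i| →
      ∀ j, (T.adjMatrix ℝ * T.adjMatrix ℝ) i j ≠ 0 → |v j| = |v i|) := by
  set A := T.adjMatrix ℝ with hA
  have hBv : (A * A) *ᵥ v = (μ ^ 2) • v := by
    rw [← Matrix.mulVec_mulVec, hμv, Matrix.mulVec_smul, hμv, smul_smul, sq]
  have hBi : ∑ j, (A * A) i j * v j = μ ^ 2 * v i := by
    have := congrFun hBv i
    simpa [Matrix.mulVec, dotProduct] using this
  have c1 : μ ^ 2 * |v i| = |∑ j, (A * A) i j * v j| := by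
    rw [hBi, abs_mul, abs_of_nonneg (sq_nonneg μ)]
  have c2 : |∑ j, (A * A) i j * v j| ≤ ∑ j, (A * A) i j * |v j| := by
    refine (Finset.abs_sum_le_sum_abs _ _).trans ?_
    refine le_of_eq (Finset.sum_congr rfl fun j _ => ?_)
    rw [abs_mul, abs_of_nonneg (specaux_B_nonneg T i j)]
  have c3 : ∑ j, (A * A) i j * |v j| ≤ ∑ j, (A * A) i j * |v i| :=
    Finset.sum_le_sum fun j _ => mul_le_mul_of_nonneg_left (hmax j) (specaux_B_nonneg T i j)
  have c4 : ∑ j, (A * A) i j * |v i| = (Srow T i : ℝ) * |v i| := by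
    rw [← Finset.sum_mul, specaux_rowsumB]
  constructor
  · rw [c1]; exact c2.trans (c3.trans_eq c4)
  · intro hS j hBij
    have h5 : ∑ j, (A * A) i j * |v j| = ∑ j, (A * A) i j * |v i| := by
      refine le_antisymm c3 ?_
      rw [c4]
      exact hS.trans (c1.le.trans c2)
    have h6 := (Finset.sum_eq_sum_iff_of_le
      (fun j _ => mul_le_mul_of_nonneg_left (hmax j) (specaux_B_nonneg T i j))).1 h5
    exact mul_left_cancel₀ hBij (h6 j (Finset.mem_univ j))

/- ## The spectral bound -/

lemma specaux_sq_le (hac : T.IsAcyclic) {μ : ℝ} (hμ : μ ∈ spectrum ℝ (T.adjMatrix ℝ)) :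
    μ ^ 2 ≤ (Fintype.card V : ℝ) - 1 := by
  obtain ⟨v, hv0, hμv⟩ := specaux_mem_spec_iff.1 hμ
  obtain ⟨x, hx⟩ := Function.ne_iff.1 hv0
  obtain ⟨i, -, hmaxi⟩ := Finset.exists_max_image univ (fun y => |v y|) ⟨x, Finset.mem_univ x⟩
  have hmax : ∀ y, |v y| ≤ |v i| := fun y => hmaxi y (Finset.mem_univ y)
  have hmpos : 0 < |v i| := lt_of_lt_of_le (abs_pos.2 hx) (hmax x)
  have hc1 : 1 ≤ Fintype.card V := Fintype.card_pos_iff.2 ⟨x⟩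
  have h2 : (Srow T i : ℝ) ≤ (Fintype.card V : ℝ) - 1 := by
    calc (Srow T i : ℝ) ≤ ((Fintype.card V - 1 : ℕ) : ℝ) := by
          exact_mod_cast specaux_Srow_le hac i
      _ = _ := by rw [Nat.cast_sub hc1]; simp
  have h3 := (specaux_chain hμv i hmax).1.trans
    (mul_le_mul_of_nonneg_right h2 (abs_nonneg _))
  exact le_of_mul_le_mul_right h3 hmpos

lemma specaux_specRad_le (hac : T.IsAcyclic) :
    specRad T ≤ Real.sqrt ((Fintype.card V : ℝ) - 1) := by
  apply Real.sSup_le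
  · intro μ hμ
    calc μ ≤ |μ| := le_abs_self μ
      _ = Real.sqrt (μ ^ 2) := (Real.sqrt_sq_eq_abs μ).symm
      _ ≤ _ := Real.sqrt_le_sqrt (specaux_sq_le hac hμ)
  · exact Real.sqrt_nonneg _

/- ## Stars -/

lemma specaux_star_adj_iff (hac : T.IsAcyclic) {c : V} (hc : ∀ w, w ≠ c → T.Adj c w) (u w : V) :
    T.Adj u w ↔ (u = c ∧ w ≠ c) ∨ (w = c ∧ u ≠ c) := by
  constructor
  · intro h
    by_cases hu : u = c
    · subst hu; exact Or.inl ⟨rfl, h.ne'⟩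
    · by_cases hw : w = c
      · exact Or.inr ⟨hw, hu⟩
      · exact (specaux_no_triangle hac (hc u hu) h (hc w hw)).elim
  · rintro (⟨rfl, hw⟩ | ⟨rfl, hu⟩)
    · exact hc w hw
    · exact (hc u hu).symm

lemma specaux_star_iso (hac : T.IsAcyclic) {c : V} (hc : ∀ w, w ≠ c → T.Adj c w) {n : ℕ}
    (hn : Fintype.card V = n) :
    Nonempty (T ≃g completeBipartiteGraph (Fin 1) (Fin (n - 1))) := by
  have hcard : Fintype.card {x : V // ¬ x = c} = n - 1 := by
    rw [Fintype.card_subtype_compl, Fintype.card_subtype_eq, hn]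
  have e1 : {x : V // x = c} ≃ Fin 1 := Fintype.equivFinOfCardEq (Fintype.card_subtype_eq c)
  have e2 : {x : V // ¬ x = c} ≃ Fin (n - 1) := Fintype.equivFinOfCardEq hcard
  refine ⟨⟨(Equiv.sumCompl (· = c)).symm.trans (Equiv.sumCongr e1 e2), ?_⟩⟩
  intro a b
  rw [specaux_star_adj_iff hac hc]
  by_cases ha : a = c <;> by_cases hb : b = c <;>
    simp [Equiv.sumCompl_symm_apply_of_pos, Equiv.sumCompl_symm_apply_of_neg, ha, hb]

lemma specaux_center_of_iso {n : ℕ} (e : T ≃g completeBipartiteGraph (Fin 1) (Fin (n - 1))) :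
    ∀ w, w ≠ e.symm (Sum.inl 0) → T.Adj (e.symm (Sum.inl 0)) w := by
  intro w hw
  rcases h : e w with j | y
  · have hj : (j : Fin 1) = 0 := Subsingleton.elim _ _
    subst hj
    exact absurd (e.toEquiv.injective (h.trans (e.apply_symm_apply _).symm)) hw
  · have this := e.symm.map_rel_iff (a := Sum.inl 0) (b := Sum.inr y)
    have hyw : e.symm (Sum.inr y) = w := by rw [← h, e.symm_apply_apply]
    rw [hyw] at this
    exact this.2 (by simp)

lemma specaux_star_sqrt_mem (hac : T.IsAcyclic) {c : V} (hc : ∀ w, w ≠ c → T.Adj c w) :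
    Real.sqrt ((Fintype.card V : ℝ) - 1) ∈ spectrum ℝ (T.adjMatrix ℝ) := by
  have hpos : 0 < Fintype.card V := Fintype.card_pos_iff.2 ⟨c⟩
  rcases eq_or_lt_of_le (Nat.one_le_iff_ne_zero.2 hpos.ne') with h1 | h2
  · have hcard : Fintype.card V = 1 := h1.symm
    have hnoadj : ∀ x y : V, ¬ T.Adj x y := by
      intro x y h
      exact h.ne (Fintype.card_le_one_iff.1 hcard.le x y)
    rw [specaux_mem_spec_iff]
    refine ⟨fun _ => 1, fun h => one_ne_zero (congrFun h c), ?_⟩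
    funext x
    have hN : T.neighborFinset x = ∅ := by
      ext u; simp [mem_neighborFinset, hnoadj]
    simp [hN, hcard, Pi.smul_apply]
  · set μ := Real.sqrt ((Fintype.card V : ℝ) - 1) with hμ
    have hge : (0:ℝ) ≤ (Fintype.card V : ℝ) - 1 := by
      have : (1:ℝ) ≤ (Fintype.card V : ℝ) := by exact_mod_cast hpos
      linarith
    have hNc : T.neighborFinset c = univ.erase c := by
      ext u
      simp only [mem_neighborFinset, Finset.mem_erase, Finset.mem_univ, and_true]
      exact ⟨fun h => h.ne', fun h => hc u h⟩
    have hNx : ∀ x, x ≠ c → T.neighborFinset x = {c} := by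
      intro x hx
      ext u
      simp only [mem_neighborFinset, Finset.mem_singleton]
      constructor
      · intro h
        by_contra hu
        exact specaux_no_triangle hac (hc x hx) h (hc u hu)
      · rintro rfl; exact (hc x hx).symm
    rw [specaux_mem_spec_iff]
    refine ⟨fun x => if x = c then μ else 1, ?_, ?_⟩
    · obtain ⟨w, hw⟩ := Fintype.exists_ne_of_one_lt_card h2 c
      intro h
      have := congrFun h w
      simp [hw] at this
    · funext x
      by_cases hx : x = c
      · rw [hx]
        rw [adjMatrix_mulVec_apply, hNc]
        have hsum : ∑ u ∈ univ.erase c, (fun x => if x = c then μ else 1) u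
            = ((univ.erase c).card : ℝ) := by
          rw [Finset.sum_congr rfl (fun u hu => if_neg (Finset.mem_erase.1 hu).1)]
          simp
        rw [hsum, Finset.card_erase_of_mem (Finset.mem_univ _), Finset.card_univ]
        have hcast : ((Fintype.card V - 1 : ℕ) : ℝ) = (Fintype.card V : ℝ) - 1 := by
          rw [Nat.cast_sub hpos]; simp
        rw [hcast]
        simp only [Pi.smul_apply, if_pos rfl, smul_eq_mul]
        rw [← Real.mul_self_sqrt hge]
        simp [hμ]
      · rw [adjMatrix_mulVec_apply, hNx x hx]
        simp [hx]

end Aux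

theorem stmt3 {V : Type*} [Fintype V] [DecidableEq V] (T : SimpleGraph V) (n : ℕ)
    (hn : Fintype.card V = n) (hconn : T.Connected) (hac : T.IsAcyclic) :
    specRad T ≤ Real.sqrt ((n : ℝ) - 1) ∧
      (specRad T = Real.sqrt ((n : ℝ) - 1) ↔
        Nonempty (T ≃g completeBipartiteGraph (Fin 1) (Fin (n - 1)))) := by
  subst hn
  have hV : Nonempty V := hconn.nonempty
  have hc1 : 1 ≤ Fintype.card V := Fintype.card_pos_iff.2 hV
  have hge : (0:ℝ) ≤ (Fintype.card V : ℝ) - 1 := by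
    have : (1:ℝ) ≤ (Fintype.card V : ℝ) := by exact_mod_cast hc1
    linarith
  have hcast : ((Fintype.card V - 1 : ℕ) : ℝ) = (Fintype.card V : ℝ) - 1 := by
    rw [Nat.cast_sub hc1]; simp
  refine ⟨specaux_specRad_le hac, ?_, ?_⟩
  · -- equality implies star
    intro hEq
    have hfin := Matrix.finite_spectrum (T.adjMatrix ℝ)
    have hmem : Real.sqrt ((Fintype.card V : ℝ) - 1) ∈ spectrum ℝ (T.adjMatrix ℝ) := by
      rw [← hEq]
      exact Set.Nonempty.csSup_mem (specaux_spec_nonempty T hV) hfin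
    obtain ⟨v, hv0, hμv⟩ := specaux_mem_spec_iff.1 hmem
    obtain ⟨x0, hx0⟩ := Function.ne_iff.1 hv0
    obtain ⟨i, -, hmaxi⟩ :=
      Finset.exists_max_image Finset.univ (fun y => |v y|) ⟨x0, Finset.mem_univ x0⟩
    have hmax : ∀ y, |v y| ≤ |v i| := fun y => hmaxi y (Finset.mem_univ y)
    have hmpos : 0 < |v i| := lt_of_lt_of_le (abs_pos.2 hx0) (hmax x0)
    have hsq : (Real.sqrt ((Fintype.card V : ℝ) - 1)) ^ 2 = (Fintype.card V : ℝ) - 1 :=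
      Real.sq_sqrt hge
    have key : ∀ x, |v x| = |v i| →
        (Srow T x = Fintype.card V - 1) ∧
        ∀ j, (T.adjMatrix ℝ * T.adjMatrix ℝ) x j ≠ 0 → |v j| = |v i| := by
      intro x hx
      have hmax' : ∀ y, |v y| ≤ |v x| := fun y => hx ▸ hmax y
      have hch := specaux_chain hμv x hmax'
      have hSle : (Srow T x : ℝ) ≤ (Fintype.card V : ℝ) - 1 := by
        rw [← hcast]; exact_mod_cast specaux_Srow_le hac x
      have hxpos : 0 < |v x| := hx ▸ hmpos
      have h1 : (Fintype.card V : ℝ) - 1 ≤ (Srow T x : ℝ) := by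
        have := hch.1
        rw [hsq] at this
        exact le_of_mul_le_mul_right this hxpos
      have hSe : (Srow T x : ℝ) = (Fintype.card V : ℝ) - 1 := le_antisymm hSle h1
      refine ⟨?_, fun j hj => (hch.2 (by rw [hsq, hSe]) j hj).trans hx⟩
      have : (Srow T x : ℝ) = ((Fintype.card V - 1 : ℕ) : ℝ) := by rw [hcast, hSe]
      exact_mod_cast this
    by_cases hstar : ∀ w, w ≠ i → T.Adj i w
    · exact specaux_star_iso hac hstar rfl
    · push_neg at hstar
      obtain ⟨w, hwne, hwnadj⟩ := hstar
      obtain ⟨hSi, hprop⟩ := key i rfl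
      rcases specaux_Srow_eq hac i hSi w hwne with h | ⟨k, hik, hkw⟩
      · exact absurd h hwnadj
      have hvw : |v w| = |v i| := hprop w (specaux_B_ne_zero T hik hkw)
      obtain ⟨hSw, -⟩ := key w hvw
      have hQ := specaux_Srow_eq hac w hSw
      have hNik : ∀ ℓ, T.Adj i ℓ → ℓ = k := by
        intro ℓ hiℓ
        by_contra hℓk
        have hℓw : ℓ ≠ w := fun h => hwnadj (h ▸ hiℓ)
        rcases hQ ℓ hℓw with h | ⟨k', hwk', hk'ℓ⟩
        · exact specaux_no_quad hac (fun hh => hℓk hh.symm) (Ne.symm hwne) hik hkw hiℓ h.symm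
        · by_cases hk'k : k' = k
          · exact specaux_no_triangle hac hik (hk'k ▸ hk'ℓ) hiℓ
          · have hik' : i ≠ k' := fun h => hwnadj ((h ▸ hwk').symm)
            exact specaux_no_23 hac (Ne.symm hwne) hik' hℓw hik hkw hiℓ hk'ℓ.symm hwk'.symm
      have hck : ∀ z, z ≠ k → T.Adj k z := by
        intro z hz
        by_cases hzi : z = i
        · rw [hzi]; exact hik.symm
        rcases specaux_Srow_eq hac i hSi z hzi with h | ⟨k₀, hik₀, hk₀z⟩
        · exact absurd (hNik z h) hz
        · rw [hNik k₀ hik₀] at hk₀z; exact hk₀z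
      exact specaux_star_iso hac hck rfl
  · rintro ⟨e⟩
    have hc := specaux_center_of_iso e
    refine le_antisymm (specaux_specRad_le hac) ?_
    exact le_csSup (Set.Finite.bddAbove (Matrix.finite_spectrum _))
      (specaux_star_sqrt_mem hac hc)
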